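/- arXiv:1206.2557 — 2 statements merged into one kernel-verified Lean document; each statement's English description precedes it below -/
import Mathlib

section
/- Let w_1,…,w_n ∈ ℝ^d. For integers 1 ≤ k ≤ l ≤ n and j ∈ {1,…,d}, let H_{k:l,j}(t) = (1/(l−k+1)) #{i ∈ {k,…,l} : w_{ij} ≤ t} be the empirical c.d.f. of w_{kj},…,w_{lj}, let Q_{k:l,j}(u) = inf{t ∈ ℝ : H_{k:l,j}(t) ≥ u} for u ∈ (0,1], and let Ŵ_{ij}^{k:l} = H_{k:l,j}(w_{ij}). Then sup over all 1 ≤ k ≤ l ≤ n and all u ∈ (0,1]^d of |Σ_{i=k}^{l} (1{∀j, w_{ij} ≤ Q_{k:l,j}(u_j)} − 1{∀j, Ŵ_{ij}^{k:l} ≤ u_j})| is at most Σ_{j=1}^d max_{v∈ℝ} #{i ∈ {1,…,n} : w_{ij} = v}. -/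
open Finset

noncomputable section

/-- Empirical c.d.f. of the `j`-th coordinates of the subsample `w k, …, w l`. -/
def subEcdf (d : ℕ) (w : ℕ → Fin d → ℝ) (k l : ℕ) (j : Fin d) (t : ℝ) : ℝ :=
  (((Finset.Icc k l).filter fun i => w i j ≤ t).card : ℝ) / ((l : ℝ) - (k : ℝ) + 1)

/-- Generalized inverse (quantile function) of the subsample empirical c.d.f. -/
def subEquant (d : ℕ) (w : ℕ → Fin d → ℝ) (k l : ℕ) (j : Fin d) (u : ℝ) : ℝ :=
  sInf {t : ℝ | u ≤ subEcdf d w k l j t}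

/-- for every subsample `w k, …, w l` of `w 1, …, w n` and every
`u ∈ (0,1]^d`, the difference between the number of points below the vector of
subsample empirical quantiles and the number of pseudo-observations below `u` is
bounded in absolute value by the sum over coordinates of the maximal multiplicity of a
value in that coordinate. -/
theorem rank_vs_quantile_indicator_bound (n d : ℕ) (w : ℕ → Fin d → ℝ)
    (k l : ℕ) (hk : 1 ≤ k) (hkl : k ≤ l) (hln : l ≤ n)
    (u : Fin d → ℝ) (hu0 : ∀ j, 0 < u j) (hu1 : ∀ j, u j ≤ 1) :
    |∑ i ∈ Finset.Icc k l,
        ((if ∀ j, w i j ≤ subEquant d w k l j (u j) then (1:ℝ) else 0)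
          - (if ∀ j, subEcdf d w k l j (w i j) ≤ u j then (1:ℝ) else 0))|
      ≤ ∑ j : Fin d, ⨆ v : ℝ, (((Finset.Icc 1 n).filter fun i => w i j = v).card : ℝ) := by
  have hIcc : (Finset.Icc k l).Nonempty := ⟨k, by simp [hkl]⟩
  have hklR : (k : ℝ) ≤ l := Nat.cast_le.2 hkl
  have hm0 : (0:ℝ) < (l : ℝ) - k + 1 := by linarith
  have hcardIcc : ((Finset.Icc k l).card : ℝ) = (l : ℝ) - k + 1 := by
    rw [Nat.card_Icc, Nat.cast_sub (hkl.trans (Nat.le_succ l))]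
    push_cast; ring
  -- the defining set of the quantile is nonempty
  have hSne : ∀ j, {t : ℝ | u j ≤ subEcdf d w k l j t}.Nonempty := by
    intro j
    set T : ℝ := ((Finset.Icc k l).image fun i => w i j).max' (hIcc.image (fun i => w i j)) with hT
    refine ⟨T, ?_⟩
    have hfull : (Finset.Icc k l).filter (fun i => w i j ≤ T) = Finset.Icc k l := by
      apply Finset.filter_true_of_mem
      intro i hi
      exact Finset.le_max' ((Finset.Icc k l).image fun i => w i j) (w i j) (Finset.mem_image_of_mem _ hi)
    simp only [Set.mem_setOf_eq, subEcdf, hfull, hcardIcc]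
    rw [div_self (ne_of_gt hm0)]
    exact hu1 j
  -- the defining set of the quantile is bounded below
  have hBdd : ∀ j, BddBelow {t : ℝ | u j ≤ subEcdf d w k l j t} := by
    intro j
    refine ⟨((Finset.Icc k l).image fun i => w i j).min' (hIcc.image (fun i => w i j)), ?_⟩
    intro t ht
    simp only [Set.mem_setOf_eq] at ht
    have hpos : 0 < ((Finset.Icc k l).filter fun i => w i j ≤ t).card := by
      rcases Nat.eq_zero_or_pos ((Finset.Icc k l).filter fun i => w i j ≤ t).card with h0 | h
      · exfalso
        have hz : subEcdf d w k l j t = 0 := by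
          simp [subEcdf, h0]
        rw [hz] at ht
        linarith [hu0 j]
      · exact h
    obtain ⟨i0, hi0⟩ := Finset.card_pos.1 hpos
    rw [Finset.mem_filter] at hi0
    exact le_trans (Finset.min'_le _ _ (Finset.mem_image_of_mem _ hi0.1)) hi0.2
  -- key 1 : small rank implies below quantile
  have key1 : ∀ i ∈ Finset.Icc k l, ∀ j, subEcdf d w k l j (w i j) ≤ u j →
      w i j ≤ subEquant d w k l j (u j) := by
    intro i hi j hH
    apply le_csInf (hSne j)
    intro t ht
    simp only [Set.mem_setOf_eq] at ht
    by_contra hlt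
    push_neg at hlt
    have hsub : (Finset.Icc k l).filter (fun i' => w i' j ≤ t) ⊆
        ((Finset.Icc k l).filter (fun i' => w i' j ≤ w i j)).erase i := by
      intro x hx
      rw [Finset.mem_filter] at hx
      rw [Finset.mem_erase, Finset.mem_filter]
      refine ⟨?_, hx.1, le_trans hx.2 hlt.le⟩
      rintro rfl
      exact absurd hx.2 (not_le.2 hlt)
    have hmem : i ∈ (Finset.Icc k l).filter (fun i' => w i' j ≤ w i j) :=
      Finset.mem_filter.2 ⟨hi, le_refl _⟩
    have hcardlt : ((Finset.Icc k l).filter (fun i' => w i' j ≤ t)).card <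
        ((Finset.Icc k l).filter (fun i' => w i' j ≤ w i j)).card :=
      lt_of_le_of_lt (Finset.card_le_card hsub) (Finset.card_erase_lt_of_mem hmem)
    have h1 : subEcdf d w k l j t < subEcdf d w k l j (w i j) :=
      (div_lt_div_iff_of_pos_right hm0).2 (by exact_mod_cast hcardlt)
    linarith
  -- key 2 : strictly below quantile implies small rank
  have key2 : ∀ (i : ℕ), ∀ j, w i j < subEquant d w k l j (u j) →
      subEcdf d w k l j (w i j) ≤ u j := by
    intro i j hlt
    by_contra h
    push_neg at h
    have : subEquant d w k l j (u j) ≤ w i j :=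
      csInf_le (hBdd j) (by simpa [Set.mem_setOf_eq] using h.le)
    linarith
  -- pointwise bounds on the summand
  have hnonneg : ∀ i ∈ Finset.Icc k l,
      (0:ℝ) ≤ (if ∀ j, w i j ≤ subEquant d w k l j (u j) then (1:ℝ) else 0)
        - (if ∀ j, subEcdf d w k l j (w i j) ≤ u j then (1:ℝ) else 0) := by
    intro i hi
    by_cases hR : ∀ j, subEcdf d w k l j (w i j) ≤ u j
    · have hP : ∀ j, w i j ≤ subEquant d w k l j (u j) := fun j => key1 i hi j (hR j)
      simp [hR, hP]
    · simp only [if_neg hR, sub_zero]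
      by_cases hP : ∀ j, w i j ≤ subEquant d w k l j (u j) <;> simp [hP]
  have hterm : ∀ i ∈ Finset.Icc k l,
      (if ∀ j, w i j ≤ subEquant d w k l j (u j) then (1:ℝ) else 0)
        - (if ∀ j, subEcdf d w k l j (w i j) ≤ u j then (1:ℝ) else 0)
      ≤ ∑ j : Fin d, (if w i j = subEquant d w k l j (u j) then (1:ℝ) else 0) := by
    intro i hi
    have hRHS0 : (0:ℝ) ≤ ∑ j : Fin d,
        (if w i j = subEquant d w k l j (u j) then (1:ℝ) else 0) :=
      Finset.sum_nonneg fun j _ => by positivity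
    by_cases hP : ∀ j, w i j ≤ subEquant d w k l j (u j)
    · by_cases hR : ∀ j, subEcdf d w k l j (w i j) ≤ u j
      · simp [hP, hR]
      · push_neg at hR
        obtain ⟨j0, hj0⟩ := hR
        have heq : w i j0 = subEquant d w k l j0 (u j0) := by
          refine le_antisymm (hP j0) ?_
          by_contra hc
          push_neg at hc
          exact absurd (key2 i j0 hc) (not_le.2 hj0)
        have h1 : (1:ℝ) ≤ ∑ j : Fin d,
            (if w i j = subEquant d w k l j (u j) then (1:ℝ) else 0) := by
          have := Finset.single_le_sum
            (f := fun j : Fin d => (if w i j = subEquant d w k l j (u j) then (1:ℝ) else 0))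
            (fun j _ => by positivity) (Finset.mem_univ j0)
          simpa [heq] using this
        calc _ ≤ (1:ℝ) := by
              by_cases hR' : ∀ j, subEcdf d w k l j (w i j) ≤ u j <;> simp [hP, hR']
          _ ≤ _ := h1
    · have hR : ¬ ∀ j, subEcdf d w k l j (w i j) ≤ u j := by
        intro hR
        exact hP fun j => key1 i hi j (hR j)
      simp [hP, hR]
  -- bounded above for the supremum
  have hbddAbove : ∀ j : Fin d, BddAbove (Set.range fun v : ℝ =>
      (((Finset.Icc 1 n).filter fun i => w i j = v).card : ℝ)) := by
    intro j
    refine ⟨n, ?_⟩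
    rintro x ⟨v, rfl⟩
    have h1 : ((Finset.Icc 1 n).filter fun i => w i j = v).card ≤ (Finset.Icc 1 n).card :=
      Finset.card_le_card (Finset.filter_subset _ _)
    have h2 : (Finset.Icc 1 n).card = n := by rw [Nat.card_Icc]; omega
    show (((Finset.Icc 1 n).filter fun i => w i j = v).card : ℝ) ≤ (n : ℝ)
    exact_mod_cast h1.trans_eq h2
  -- main chain
  have habs : |∑ i ∈ Finset.Icc k l,
      ((if ∀ j, w i j ≤ subEquant d w k l j (u j) then (1:ℝ) else 0)
        - (if ∀ j, subEcdf d w k l j (w i j) ≤ u j then (1:ℝ) else 0))|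
      = ∑ i ∈ Finset.Icc k l,
      ((if ∀ j, w i j ≤ subEquant d w k l j (u j) then (1:ℝ) else 0)
        - (if ∀ j, subEcdf d w k l j (w i j) ≤ u j then (1:ℝ) else 0)) :=
    abs_of_nonneg (Finset.sum_nonneg hnonneg)
  rw [habs]
  calc ∑ i ∈ Finset.Icc k l,
      ((if ∀ j, w i j ≤ subEquant d w k l j (u j) then (1:ℝ) else 0)
        - (if ∀ j, subEcdf d w k l j (w i j) ≤ u j then (1:ℝ) else 0))
      ≤ ∑ i ∈ Finset.Icc k l, ∑ j : Fin d,
          (if w i j = subEquant d w k l j (u j) then (1:ℝ) else 0) :=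
        Finset.sum_le_sum hterm
    _ = ∑ j : Fin d, ∑ i ∈ Finset.Icc k l,
          (if w i j = subEquant d w k l j (u j) then (1:ℝ) else 0) := Finset.sum_comm
    _ = ∑ j : Fin d, (((Finset.Icc k l).filter
          fun i => w i j = subEquant d w k l j (u j)).card : ℝ) := by
        refine Finset.sum_congr rfl fun j _ => ?_
        rw [Finset.sum_boole]
    _ ≤ ∑ j : Fin d, (((Finset.Icc 1 n).filter
          fun i => w i j = subEquant d w k l j (u j)).card : ℝ) := by
        refine Finset.sum_le_sum fun j _ => ?_
        exact_mod_cast Finset.card_le_card (Finset.filter_subset_filter _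
          (Finset.Icc_subset_Icc hk hln))
    _ ≤ ∑ j : Fin d, ⨆ v : ℝ, (((Finset.Icc 1 n).filter fun i => w i j = v).card : ℝ) :=
        Finset.sum_le_sum fun j _ =>
          le_ciSup (hbddAbove j) (subEquant d w k l j (u j))
end
end

section
/- Let ξ_1,…,ξ_n be real random variables on a probability space (Ω, P) such that for all integers 1 ≤ k ≤ l ≤ n, the sum Σ_{i=k}^{l} ξ_i has the same distribution as Σ_{i=1}^{l−k+1} ξ_i, and let ν > 0 be such that E|Σ_{i=1}^{r} ξ_i|^ν < ∞ for all 1 ≤ r ≤ n. Then for every η > 0 and every real b ≥ 1: P( max over 1 ≤ k ≤ l ≤ n with l − k ≥ b of |(1/(l−k+1)) Σ_{i=k}^{l} ξ_i| > η ) ≤ η^{-ν} · n · Σ_{r integer, b < r ≤ n} r^{-ν} · E|Σ_{i=1}^{r} ξ_i|^ν. -/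
open MeasureTheory Finset

-- Markov-type lemma for a single window
lemma single_window {Ω : Type*} [MeasurableSpace Ω]
    (P : Measure Ω) [IsProbabilityMeasure P]
    (n : ℕ) (ξ : ℕ → Ω → ℝ) (hmeas : ∀ i, Measurable (ξ i))
    (hstat : ∀ k l : ℕ, 1 ≤ k → k ≤ l → l ≤ n →
      Measure.map (fun ω => ∑ i ∈ Finset.Icc k l, ξ i ω) P
        = Measure.map (fun ω => ∑ i ∈ Finset.Icc 1 (l - k + 1), ξ i ω) P)
    (ν : ℝ) (hν : 0 < ν)
    (hint : ∀ r : ℕ, 1 ≤ r → r ≤ n →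
      Integrable (fun ω => |∑ i ∈ Finset.Icc 1 r, ξ i ω| ^ ν) P)
    (η : ℝ) (hη : 0 < η) (k l : ℕ) (hk : 1 ≤ k) (hkl : k ≤ l) (hln : l ≤ n) :
    P {ω | η < |(1 / ((l : ℝ) - (k : ℝ) + 1)) * ∑ i ∈ Finset.Icc k l, ξ i ω|}
      ≤ ENNReal.ofReal (η ^ (-ν) * ((l - k + 1 : ℕ) : ℝ) ^ (-ν) *
          ∫ ω, |∑ i ∈ Finset.Icc 1 (l - k + 1) , ξ i ω| ^ ν ∂P) := by
  set r : ℕ := l - k + 1 with hr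
  have hrcast : ((r : ℝ)) = (l : ℝ) - (k : ℝ) + 1 := by
    have : (l : ℝ) - (k : ℝ) = ((l - k : ℕ) : ℝ) := by
      push_cast [Nat.cast_sub hkl]; ring
    rw [hr]; push_cast [Nat.cast_sub hkl]; ring
  have hrpos : (0 : ℝ) < r := by exact_mod_cast Nat.lt_of_lt_of_le Nat.zero_lt_one (Nat.le_add_left 1 _)
  have hr1 : 1 ≤ r := Nat.le_add_left 1 _
  have hrn : r ≤ n := by omega
  -- rewrite the event
  have hset : {ω | η < |(1 / ((l : ℝ) - (k : ℝ) + 1)) * ∑ i ∈ Finset.Icc k l, ξ i ω|}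
      = (fun ω => ∑ i ∈ Finset.Icc k l, ξ i ω) ⁻¹' {x : ℝ | η * r < |x|} := by
    ext ω
    simp only [Set.mem_setOf_eq, Set.mem_preimage, abs_mul, abs_of_pos
      (by rw [← hrcast] at *; positivity : (0:ℝ) < 1 / ((l : ℝ) - (k : ℝ) + 1))]
    rw [← hrcast]
    rw [one_div, inv_mul_eq_div, lt_div_iff₀ hrpos]
  have hSm : Measurable (fun ω => ∑ i ∈ Finset.Icc k l, ξ i ω) :=
    Finset.measurable_sum _ (fun i _ => hmeas i)
  have hSrm : Measurable (fun ω => ∑ i ∈ Finset.Icc 1 r, ξ i ω) :=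
    Finset.measurable_sum _ (fun i _ => hmeas i)
  have hBm : MeasurableSet {x : ℝ | η * r < |x|} :=
    measurableSet_lt measurable_const measurable_id.abs
  rw [hset, ← Measure.map_apply hSm hBm, hstat k l hk hkl hln, ← hr,
    Measure.map_apply hSrm hBm]
  -- Markov
  have hε : (0:ℝ) < (η * r) ^ ν := by positivity
  have hsub : (fun ω => ∑ i ∈ Finset.Icc 1 r, ξ i ω) ⁻¹' {x : ℝ | η * r < |x|}
      ⊆ {ω | (η * r) ^ ν ≤ |∑ i ∈ Finset.Icc 1 r, ξ i ω| ^ ν} := by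
    intro ω hω
    simp only [Set.mem_preimage, Set.mem_setOf_eq] at hω ⊢
    exact Real.rpow_le_rpow (by positivity) hω.le hν.le
  have hmarkov := mul_meas_ge_le_integral_of_nonneg
    (f := fun ω => |∑ i ∈ Finset.Icc 1 r, ξ i ω| ^ ν)
    (Filter.Eventually.of_forall (fun ω => by positivity)) (hint r hr1 hrn) ((η * r) ^ ν)
  have hPlt : P ((fun ω => ∑ i ∈ Finset.Icc 1 r, ξ i ω) ⁻¹' {x : ℝ | η * r < |x|}) ≠ ⊤ :=
    (measure_lt_top _ _).ne
  calc P ((fun ω => ∑ i ∈ Finset.Icc 1 r, ξ i ω) ⁻¹' {x : ℝ | η * r < |x|})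
      ≤ P {ω | (η * r) ^ ν ≤ |∑ i ∈ Finset.Icc 1 r, ξ i ω| ^ ν} := measure_mono hsub
    _ ≤ ENNReal.ofReal (η ^ (-ν) * (r:ℝ) ^ (-ν) * ∫ ω, |∑ i ∈ Finset.Icc 1 r, ξ i ω| ^ ν ∂P) := by
        rw [← ENNReal.ofReal_toReal (measure_lt_top P _).ne]
        apply ENNReal.ofReal_le_ofReal
        have h1 : (P {ω | (η * r) ^ ν ≤ |∑ i ∈ Finset.Icc 1 r, ξ i ω| ^ ν}).toReal
            ≤ ((η * r) ^ ν)⁻¹ * ∫ ω, |∑ i ∈ Finset.Icc 1 r, ξ i ω| ^ ν ∂P := by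
          rw [le_inv_mul_iff₀ hε]; exact hmarkov
        have h2 : ((η * r) ^ ν)⁻¹ = η ^ (-ν) * (r:ℝ) ^ (-ν) := by
          rw [Real.mul_rpow hη.le hrpos.le, Real.rpow_neg hη.le, Real.rpow_neg hrpos.le,
            mul_inv]
        rw [h2, mul_assoc] at h1; rw [mul_assoc]; exact h1

/-- maximal inequality for window averages. If all window sums
`Σ_{i=k}^l ξ_i` of length `r = l−k+1` have the same distribution as `Σ_{i=1}^r ξ_i`
and `E|Σ_{i=1}^r ξ_i|^ν < ∞`, then for every `η > 0` and `b ≥ 1`,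
`P(max over windows of length ≥ b+1 of |window average| > η)`
is at most `η^{−ν}·n·Σ_{b < r ≤ n} r^{−ν}·E|Σ_{i=1}^r ξ_i|^ν`. -/
theorem window_average_maximal_inequality {Ω : Type*} [MeasurableSpace Ω]
    (P : Measure Ω) [IsProbabilityMeasure P]
    (n : ℕ) (ξ : ℕ → Ω → ℝ) (hmeas : ∀ i, Measurable (ξ i))
    (hstat : ∀ k l : ℕ, 1 ≤ k → k ≤ l → l ≤ n →
      Measure.map (fun ω => ∑ i ∈ Finset.Icc k l, ξ i ω) P
        = Measure.map (fun ω => ∑ i ∈ Finset.Icc 1 (l - k + 1), ξ i ω) P)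
    (ν : ℝ) (hν : 0 < ν)
    (hint : ∀ r : ℕ, 1 ≤ r → r ≤ n →
      Integrable (fun ω => |∑ i ∈ Finset.Icc 1 r, ξ i ω| ^ ν) P)
    (η : ℝ) (hη : 0 < η) (b : ℝ) (hb : 1 ≤ b) :
    P {ω | ∃ k l : ℕ, 1 ≤ k ∧ k ≤ l ∧ l ≤ n ∧ b ≤ (l : ℝ) - (k : ℝ) ∧
          η < |(1 / ((l : ℝ) - (k : ℝ) + 1)) * ∑ i ∈ Finset.Icc k l, ξ i ω|}
      ≤ ENNReal.ofReal (η ^ (-ν) * n *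
          ∑ r ∈ (Finset.Icc 1 n).filter (fun r : ℕ => b < (r : ℝ)),
            (r : ℝ) ^ (-ν) * ∫ ω, |∑ i ∈ Finset.Icc 1 r, ξ i ω| ^ ν ∂P) := by
  classical
  set S : Finset (ℕ × ℕ) := ((Finset.Icc 1 n) ×ˢ (Finset.Icc 1 n)).filter
    (fun p => p.1 ≤ p.2 ∧ b ≤ (p.2 : ℝ) - (p.1 : ℝ)) with hS
  set T : Finset ℕ := (Finset.Icc 1 n).filter (fun r : ℕ => b < (r : ℝ)) with hT
  set f : ℕ → ℝ := fun r => (r : ℝ) ^ (-ν) * ∫ ω, |∑ i ∈ Finset.Icc 1 r, ξ i ω| ^ ν ∂P with hf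
  have hfnn : ∀ r : ℕ, 1 ≤ r → r ≤ n → 0 ≤ f r := by
    intro r h1 h2
    apply mul_nonneg (by positivity)
    exact integral_nonneg (fun ω => by positivity)
  -- union bound
  have hsub : {ω | ∃ k l : ℕ, 1 ≤ k ∧ k ≤ l ∧ l ≤ n ∧ b ≤ (l : ℝ) - (k : ℝ) ∧
          η < |(1 / ((l : ℝ) - (k : ℝ) + 1)) * ∑ i ∈ Finset.Icc k l, ξ i ω|}
      ⊆ ⋃ p ∈ S, {ω | η < |(1 / ((p.2 : ℝ) - (p.1 : ℝ) + 1)) * ∑ i ∈ Finset.Icc p.1 p.2, ξ i ω|} := by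
    rintro ω ⟨k, l, hk, hkl, hln, hbl, hω⟩
    refine Set.mem_biUnion (show (k, l) ∈ S from ?_) hω
    simp only [hS, Finset.mem_filter, Finset.mem_product, Finset.mem_Icc]
    exact ⟨⟨⟨hk, le_trans hkl hln⟩, ⟨le_trans hk hkl, hln⟩⟩, hkl, hbl⟩
  calc P _ ≤ P (⋃ p ∈ S, {ω | η < |(1 / ((p.2 : ℝ) - (p.1 : ℝ) + 1)) *
        ∑ i ∈ Finset.Icc p.1 p.2, ξ i ω|}) := measure_mono hsub
    _ ≤ ∑ p ∈ S, P {ω | η < |(1 / ((p.2 : ℝ) - (p.1 : ℝ) + 1)) *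
        ∑ i ∈ Finset.Icc p.1 p.2, ξ i ω|} := measure_biUnion_finset_le S _
    _ ≤ ∑ p ∈ S, ENNReal.ofReal (η ^ (-ν) * f (p.2 - p.1 + 1)) := by
        refine Finset.sum_le_sum ?_
        rintro ⟨k, l⟩ hp
        simp only [hS, Finset.mem_filter, Finset.mem_product, Finset.mem_Icc] at hp
        obtain ⟨⟨⟨hk, _⟩, ⟨_, hln⟩⟩, hkl, _⟩ := hp
        have := single_window P n ξ hmeas hstat ν hν hint η hη k l hk hkl hln
        simpa [hf, mul_assoc] using this
    _ = ENNReal.ofReal (∑ p ∈ S, η ^ (-ν) * f (p.2 - p.1 + 1)) := by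
        rw [ENNReal.ofReal_sum_of_nonneg]
        rintro ⟨k, l⟩ hp
        simp only [hS, Finset.mem_filter, Finset.mem_product, Finset.mem_Icc] at hp
        obtain ⟨⟨⟨hk, _⟩, ⟨_, hln⟩⟩, hkl, _⟩ := hp
        exact mul_nonneg (by positivity) (hfnn _ (Nat.le_add_left 1 _) (by omega))
    _ ≤ ENNReal.ofReal (η ^ (-ν) * n * ∑ r ∈ T, f r) := by
        apply ENNReal.ofReal_le_ofReal
        rw [← Finset.mul_sum]
        have hmap : ∀ p ∈ S, p.2 - p.1 + 1 ∈ T := by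
          rintro ⟨k, l⟩ hp
          simp only [hS, Finset.mem_filter, Finset.mem_product, Finset.mem_Icc] at hp
          obtain ⟨⟨⟨hk, _⟩, ⟨_, hln⟩⟩, hkl, hbl⟩ := hp
          simp only [hT, Finset.mem_filter, Finset.mem_Icc]
          refine ⟨⟨Nat.le_add_left 1 _, by omega⟩, ?_⟩
          have : ((l - k + 1 : ℕ) : ℝ) = (l : ℝ) - (k : ℝ) + 1 := by
            push_cast [Nat.cast_sub hkl]; ring
          rw [this]; linarith
        have key : ∑ p ∈ S, f (p.2 - p.1 + 1) ≤ (n : ℝ) * ∑ r ∈ T, f r := by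
          rw [← Finset.sum_fiberwise_of_maps_to hmap (fun p => f (p.2 - p.1 + 1)),
            Finset.mul_sum]
          refine Finset.sum_le_sum ?_
          intro r hr
          simp only [hT, Finset.mem_filter, Finset.mem_Icc] at hr
          have hfr : 0 ≤ f r := hfnn r hr.1.1 hr.1.2
          have hcard : (S.filter (fun p => p.2 - p.1 + 1 = r)).card ≤ n := by
            have hinj : Set.InjOn (fun p : ℕ × ℕ => p.1)
                (S.filter (fun p => p.2 - p.1 + 1 = r)) := by
              rintro ⟨k1, l1⟩ h1 ⟨k2, l2⟩ h2 he
              simp only [Finset.coe_filter, Set.mem_setOf_eq, hS, Finset.mem_filter,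
                Finset.mem_product, Finset.mem_Icc] at h1 h2
              simp only at he
              subst he
              have : l1 = l2 := by omega
              simp [this]
            have hmaps : ∀ p ∈ S.filter (fun p => p.2 - p.1 + 1 = r),
                p.1 ∈ Finset.Icc 1 n := by
              rintro ⟨k, l⟩ h
              simp only [hS, Finset.mem_filter, Finset.mem_product, Finset.mem_Icc] at h ⊢
              omega
            calc (S.filter (fun p => p.2 - p.1 + 1 = r)).card
                ≤ (Finset.Icc 1 n).card := Finset.card_le_card_of_injOn _ hmaps hinj
              _ = n := by rw [Nat.card_Icc]; omega
          calc ∑ p ∈ S.filter (fun p => p.2 - p.1 + 1 = r), f (p.2 - p.1 + 1)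
              = ∑ p ∈ S.filter (fun p => p.2 - p.1 + 1 = r), f r := by
                refine Finset.sum_congr rfl ?_
                intro p hp
                rw [(Finset.mem_filter.mp hp).2]
            _ = (S.filter (fun p => p.2 - p.1 + 1 = r)).card * f r := by
                rw [Finset.sum_const, nsmul_eq_mul]
            _ ≤ (n : ℝ) * f r := by
                apply mul_le_mul_of_nonneg_right _ hfr
                exact_mod_cast hcard
        have hη' : (0:ℝ) ≤ η ^ (-ν) := by positivity
        calc η ^ (-ν) * ∑ p ∈ S, f (p.2 - p.1 + 1)
            ≤ η ^ (-ν) * ((n:ℝ) * ∑ r ∈ T, f r) := by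
              apply mul_le_mul_of_nonneg_left key hη'
          _ = η ^ (-ν) * (n:ℝ) * ∑ r ∈ T, f r := by ring
end
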